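/- Suppose X has finite second moments with covariance matrix Σ, and (X, X̃) satisfies pairwise exchangeability. Then there exists a vector s ∈ R^p such that Cov(X, X̃) equals the 2p × 2p block matrix with diagonal blocks Σ and off-diagonal blocks Σ − diag(s); in particular, Cov(X_i, X̃_j) = Cov(X_i, X_j) for all i ≠ j. -/

import Mathlib

open MeasureTheory

/-- Swapping the coordinates indexed by `A` between the two halves of a pair of
vectors. -/
noncomputable def swapSet {p : ℕ} (A : Finset (Fin p)) :
    ((Fin p → ℝ) × (Fin p → ℝ)) → ((Fin p → ℝ) × (Fin p → ℝ)) :=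
  fun z => (fun i => if i ∈ A then z.2 i else z.1 i,
            fun i => if i ∈ A then z.1 i else z.2 i)

/-- Covariance of two real random variables on `(Ω, μ)`. -/
noncomputable def cov {Ω : Type*} [MeasurableSpace Ω] (μ : Measure Ω)
    (f g : Ω → ℝ) : ℝ :=
  (∫ ω, f ω * g ω ∂μ) - (∫ ω, f ω ∂μ) * (∫ ω, g ω ∂μ)

lemma measurable_swapSet {p : ℕ} (A : Finset (Fin p)) : Measurable (swapSet A) := by
  unfold swapSet
  refine Measurable.prod ?_ ?_ <;> exact measurable_pi_lambda _ fun i => by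
    by_cases h : i ∈ A <;> simp [h] <;>
      first
      | exact (measurable_pi_apply i).comp measurable_snd
      | exact (measurable_pi_apply i).comp measurable_fst

lemma key_lemma {Ω : Type*} [MeasurableSpace Ω] (μ : Measure Ω) {p : ℕ}
    (X Xt : Ω → Fin p → ℝ) (hX : Measurable X) (hXt : Measurable Xt)
    (hpair : ∀ j : Fin p,
      (μ.map (fun ω => (X ω, Xt ω))).map (swapSet {j}) =
        μ.map (fun ω => (X ω, Xt ω)))
    (j : Fin p) (h : ((Fin p → ℝ) × (Fin p → ℝ)) → ℝ) (hh : Measurable h) :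
    ∫ ω, h (X ω, Xt ω) ∂μ = ∫ ω, h (swapSet {j} (X ω, Xt ω)) ∂μ := by
  have hm : Measurable (fun ω => (X ω, Xt ω)) := hX.prodMk hXt
  rw [← integral_map hm.aemeasurable hh.aestronglyMeasurable, ← hpair j,
      integral_map (measurable_swapSet _).aemeasurable hh.aestronglyMeasurable]
  exact integral_map hm.aemeasurable
    ((hh.comp (measurable_swapSet _)).aestronglyMeasurable)

theorem stmt2 {Ω : Type*} [MeasurableSpace Ω] (μ : Measure Ω)
    [IsProbabilityMeasure μ] {p : ℕ} (X Xt : Ω → Fin p → ℝ)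
    (hX : Measurable X) (hXt : Measurable Xt)
    (hL2X : ∀ i, MemLp (fun ω => X ω i) 2 μ)
    (hL2Xt : ∀ i, MemLp (fun ω => Xt ω i) 2 μ)
    (hpair : ∀ j : Fin p,
      (μ.map (fun ω => (X ω, Xt ω))).map (swapSet {j}) =
        μ.map (fun ω => (X ω, Xt ω))) :
    ∃ s : Fin p → ℝ,
      (∀ i j, cov μ (fun ω => Xt ω i) (fun ω => Xt ω j) =
        cov μ (fun ω => X ω i) (fun ω => X ω j)) ∧
      (∀ i j, i ≠ j → cov μ (fun ω => X ω i) (fun ω => Xt ω j) =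
        cov μ (fun ω => X ω i) (fun ω => X ω j)) ∧
      (∀ j, cov μ (fun ω => X ω j) (fun ω => Xt ω j) =
        cov μ (fun ω => X ω j) (fun ω => X ω j) - s j) := by
  have key := key_lemma μ X Xt hX hXt hpair
  -- means are equal
  have hmean : ∀ j, (∫ ω, Xt ω j ∂μ) = ∫ ω, X ω j ∂μ := by
    intro j
    have := key j (fun z => z.2 j) ((measurable_pi_apply j).comp measurable_snd)
    simpa [swapSet] using this
  -- mixed second moments for i ≠ j
  have hmix : ∀ i j, i ≠ j → (∫ ω, X ω i * Xt ω j ∂μ) = ∫ ω, X ω i * X ω j ∂μ := by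
    intro i j hij
    have := key j (fun z => z.1 i * z.2 j)
      (((measurable_pi_apply i).comp measurable_fst).mul
        ((measurable_pi_apply j).comp measurable_snd))
    simpa [swapSet, hij] using this
  -- knockoff second moments
  have htt : ∀ i j, (∫ ω, Xt ω i * Xt ω j ∂μ) = ∫ ω, X ω i * X ω j ∂μ := by
    intro i j
    by_cases hij : i = j
    · subst hij
      have := key i (fun z => z.2 i * z.2 i)
        (((measurable_pi_apply i).comp measurable_snd).mul
          ((measurable_pi_apply i).comp measurable_snd))
      simpa [swapSet] using this
    · have h1 := key i (fun z => z.2 i * z.2 j)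
        (((measurable_pi_apply i).comp measurable_snd).mul
          ((measurable_pi_apply j).comp measurable_snd))
      have hji : j ≠ i := fun h => hij h.symm
      simp only [swapSet, Finset.mem_singleton, hji, if_true, if_false, if_neg hji] at h1
      -- h1 : ∫ Xt i * Xt j = ∫ X i * Xt j
      rw [h1]
      · exact hmix i j hij
  refine ⟨fun j => cov μ (fun ω => X ω j) (fun ω => X ω j)
      - cov μ (fun ω => X ω j) (fun ω => Xt ω j), ?_, ?_, ?_⟩
  · intro i j
    simp only [cov, htt i j, hmean]
  · intro i j hij
    simp only [cov, hmix i j hij, hmean]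
  · intro j
    ring
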